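/- Let (s_1, …, s_{n+1}) be an exchangeable finite sequence of real-valued random variables, and let α ∈ (0,1) satisfy ⌈(n+1)(1−α)⌉ ≤ n. Let τ be the conformal threshold computed from the calibration scores s_1, …, s_n, i.e. τ = inf{ s ∈ ℝ : #{i ∈ {1,…,n} : s_i ≤ s} ≥ ⌈(n+1)(1−α)⌉ }. Then ℙ(s_{n+1} ≤ τ) ≥ 1 − α. -/

import Mathlib

open MeasureTheory
open scoped ENNReal

lemma conformal_aux_count {N K : ℕ} (hK : K ≤ N) (v : Fin N → ℝ) :
    K ≤ (Finset.univ.filter fun j : Fin N =>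
        (Finset.univ.filter fun i => v i < v j).card < K).card := by
  set T := Finset.univ.filter fun j : Fin N =>
      (Finset.univ.filter fun i => v i < v j).card < K with hT
  by_cases h : ∀ j : Fin N, j ∈ T
  · calc K ≤ N := hK
      _ = (Finset.univ : Finset (Fin N)).card := by simp
      _ ≤ T.card := Finset.card_le_card (fun j _ => h j)
  · push_neg at h
    obtain ⟨j₁, hj₁⟩ := h
    have hne : (Finset.univ \ T).Nonempty := ⟨j₁, by simp [hj₁]⟩
    obtain ⟨j₀, hj₀mem, hj₀min⟩ := Finset.exists_min_image (Finset.univ \ T) v hne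
    have hj₀ : K ≤ (Finset.univ.filter fun i => v i < v j₀).card := by
      have h2 := (Finset.mem_sdiff.mp hj₀mem).2
      simp only [hT, Finset.mem_filter, Finset.mem_univ, true_and, not_lt] at h2
      exact h2
    have hsub : (Finset.univ.filter fun i => v i < v j₀) ⊆ T := by
      intro i hi
      simp only [Finset.mem_filter, Finset.mem_univ, true_and] at hi
      by_contra hiT
      have hmem : i ∈ Finset.univ \ T := Finset.mem_sdiff.mpr ⟨Finset.mem_univ i, hiT⟩
      have := hj₀min i hmem
      linarith
    exact hj₀.trans (Finset.card_le_card hsub)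

theorem conformal_coverage
    {Ω : Type*} [MeasurableSpace Ω] (μ : Measure Ω) [IsProbabilityMeasure μ]
    (n : ℕ) (s : Fin (n + 1) → Ω → ℝ)
    (hmeas : ∀ i, Measurable (s i))
    (hexch : ∀ π : Equiv.Perm (Fin (n + 1)),
      Measure.map (fun ω i => s (π i) ω) μ = Measure.map (fun ω i => s i ω) μ)
    (α : ℝ) (hα : α ∈ Set.Ioo (0 : ℝ) 1)
    (hk : ⌈((n : ℝ) + 1) * (1 - α)⌉ ≤ (n : ℤ))
    (τ : Ω → ℝ)
    (hτ : ∀ ω, τ ω = sInf {t : ℝ |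
      ⌈((n : ℝ) + 1) * (1 - α)⌉ ≤
        ((Finset.univ.filter fun i : Fin n => s i.castSucc ω ≤ t).card : ℤ)}) :
    ENNReal.ofReal (1 - α) ≤ μ {ω | s (Fin.last n) ω ≤ τ ω} := by
  obtain ⟨hα0, hα1⟩ := hα
  -- the integer threshold and its ℕ version
  set k : ℤ := ⌈((n : ℝ) + 1) * (1 - α)⌉ with hk_def
  have hkpos : 0 < k := Int.ceil_pos.mpr (mul_pos (by positivity) (by linarith))
  set K : ℕ := k.toNat with hK_def
  have hKk : (K : ℤ) = k := Int.toNat_of_nonneg hkpos.le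
  have hK1 : 1 ≤ K := by omega
  have hKn : K ≤ n := by omega
  -- the family of "low rank" events
  set C : Fin (n + 1) → Set (Fin (n + 1) → ℝ) := fun j =>
    {v | (Finset.univ.filter fun i => v i < v j).card < K} with hC_def
  set B : Fin (n + 1) → Set Ω := fun j =>
    {ω | (Finset.univ.filter fun i => s i ω < s j ω).card < K} with hB_def
  have hCmeas : ∀ j, MeasurableSet (C j) := by
    intro j
    have hm : Measurable fun v : Fin (n + 1) → ℝ =>
        (Finset.univ.filter fun i => v i < v j).card := by
      simp_rw [Finset.card_filter]
      exact Finset.measurable_sum _ fun i _ =>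
        Measurable.ite (measurableSet_lt (measurable_pi_apply i) (measurable_pi_apply j))
          measurable_const measurable_const
    exact hm measurableSet_Iio
  have hF : Measurable fun ω i => s i ω := measurable_pi_lambda _ hmeas
  have hBmeas : ∀ j, MeasurableSet (B j) := fun j => hF (hCmeas j)
  -- all B j have the same measure, by exchangeability
  have hBeq : ∀ j, μ (B j) = μ (B (Fin.last n)) := by
    intro j
    set π : Equiv.Perm (Fin (n + 1)) := Equiv.swap j (Fin.last n) with hπ
    have hG : Measurable fun ω i => s (π i) ω := measurable_pi_lambda _ fun i => hmeas _
    have hset : B j = (fun ω i => s (π i) ω) ⁻¹' C (Fin.last n) := by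
      ext ω
      simp only [hB_def, hC_def, Set.mem_setOf_eq, Set.mem_preimage]
      have hcard : (Finset.univ.filter fun i => s (π i) ω < s (π (Fin.last n)) ω).card
          = (Finset.univ.filter fun i => s i ω < s j ω).card := by
        rw [show π (Fin.last n) = j from Equiv.swap_apply_right j (Fin.last n)]
        apply Finset.card_bij (fun i _ => π i)
        · intro a ha
          simp only [Finset.mem_filter, Finset.mem_univ, true_and] at ha ⊢
          exact ha
        · intro a _ b _ hab
          exact π.injective hab
        · intro b hb
          refine ⟨π.symm b, ?_, by simp⟩
          simp only [Finset.mem_filter, Finset.mem_univ, true_and] at hb ⊢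
          simpa using hb
      rw [hcard]
    rw [hset, ← Measure.map_apply hG (hCmeas (Fin.last n)), hexch π,
      Measure.map_apply hF (hCmeas (Fin.last n))]
    rfl
  -- pointwise counting: at least K of the events hold
  have hcount : ∀ ω, (K : ℝ≥0∞) ≤ ∑ j : Fin (n + 1), (B j).indicator (1 : Ω → ℝ≥0∞) ω := by
    intro ω
    have h1 : ∑ j : Fin (n + 1), (B j).indicator (1 : Ω → ℝ≥0∞) ω
        = ((Finset.univ.filter fun j : Fin (n + 1) =>
            (Finset.univ.filter fun i => s i ω < s j ω).card < K).card : ℝ≥0∞) := by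
      rw [Finset.card_filter]
      push_cast
      refine Finset.sum_congr rfl fun j _ => ?_
      by_cases hj : ω ∈ B j
      · simp only [Set.indicator_of_mem hj, Pi.one_apply]
        simp only [hB_def, Set.mem_setOf_eq] at hj
        simp [hj]
      · simp only [Set.indicator_of_notMem hj]
        simp only [hB_def, Set.mem_setOf_eq] at hj
        simp [hj]
    rw [h1]
    exact_mod_cast Nat.cast_le.mpr (conformal_aux_count (hKn.trans (Nat.le_succ n)) (fun i => s i ω))
  -- integrate
  have hsum : (K : ℝ≥0∞) ≤ ∑ j : Fin (n + 1), μ (B j) := by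
    have h2 : ∀ j : Fin (n + 1), μ (B j) = ∫⁻ ω, (B j).indicator 1 ω ∂μ := by
      intro j
      exact (lintegral_indicator_one (hBmeas j)).symm
    calc (K : ℝ≥0∞) = ∫⁻ _, (K : ℝ≥0∞) ∂μ := by simp
      _ ≤ ∫⁻ ω, ∑ j : Fin (n + 1), (B j).indicator 1 ω ∂μ := lintegral_mono hcount
      _ = ∑ j : Fin (n + 1), ∫⁻ ω, (B j).indicator 1 ω ∂μ :=
          lintegral_finset_sum _ fun j _ => (measurable_one.indicator (hBmeas j))
      _ = ∑ j : Fin (n + 1), μ (B j) := by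
          exact Finset.sum_congr rfl fun j _ => (h2 j).symm
  have hsum' : (K : ℝ≥0∞) ≤ (n + 1) * μ (B (Fin.last n)) := by
    calc (K : ℝ≥0∞) ≤ ∑ j : Fin (n + 1), μ (B j) := hsum
      _ = ∑ _j : Fin (n + 1), μ (B (Fin.last n)) := Finset.sum_congr rfl fun j _ => hBeq j
      _ = (n + 1) * μ (B (Fin.last n)) := by
          rw [Finset.sum_const, Finset.card_univ, Fintype.card_fin, nsmul_eq_mul]
          push_cast
          ring
  -- B (last n) is contained in the coverage event
  have hsubset : B (Fin.last n) ⊆ {ω | s (Fin.last n) ω ≤ τ ω} := by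
    intro ω hω
    simp only [hB_def, Set.mem_setOf_eq] at hω
    simp only [Set.mem_setOf_eq]
    rw [hτ ω]
    have hnpos : 0 < n := by omega
    have hne : (Finset.univ : Finset (Fin n)).Nonempty := ⟨⟨0, hnpos⟩, Finset.mem_univ _⟩
    set t₀ : ℝ := Finset.univ.sup' hne (fun i : Fin n => s i.castSucc ω) with ht₀
    have ht₀mem : t₀ ∈ {t : ℝ | ⌈((n : ℝ) + 1) * (1 - α)⌉ ≤
        ((Finset.univ.filter fun i : Fin n => s i.castSucc ω ≤ t).card : ℤ)} := by
      have hfull : (Finset.univ.filter fun i : Fin n => s i.castSucc ω ≤ t₀) = Finset.univ := by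
        refine Finset.filter_true_of_mem fun i _ => ?_
        rw [ht₀]
        exact Finset.le_sup' (fun i : Fin n => s i.castSucc ω) (Finset.mem_univ i)
      simp only [Set.mem_setOf_eq, hfull, Finset.card_univ, Fintype.card_fin]
      exact hk
    apply le_csInf ⟨t₀, ht₀mem⟩
    intro t ht
    simp only [Set.mem_setOf_eq] at ht
    by_contra hlt
    push_neg at hlt
    have hinj : (Finset.univ.filter fun i : Fin n => s i.castSucc ω ≤ t).card
        ≤ (Finset.univ.filter fun i : Fin (n + 1) => s i ω < s (Fin.last n) ω).card := by
      apply Finset.card_le_card_of_injOn Fin.castSucc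
      · intro i hi
        simp only [Finset.mem_coe, Finset.mem_filter, Finset.mem_univ, true_and] at hi ⊢
        linarith
      · exact (Fin.castSucc_injective n).injOn
    omega
  -- final arithmetic
  have hle : ENNReal.ofReal (1 - α) * (n + 1) ≤ μ (B (Fin.last n)) * (n + 1) := by
    calc ENNReal.ofReal (1 - α) * (n + 1) = ENNReal.ofReal ((1 - α) * (n + 1)) := by
          rw [ENNReal.ofReal_mul (by linarith)]
          congr 1
          rw [ENNReal.ofReal_add (by positivity) zero_le_one]
          simp [ENNReal.ofReal_natCast]
      _ ≤ (K : ℝ≥0∞) := by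
          rw [show ((K : ℝ≥0∞)) = ENNReal.ofReal (K : ℝ) by
            simp [ENNReal.ofReal_natCast]]
          apply ENNReal.ofReal_le_ofReal
          have hceil : ((n : ℝ) + 1) * (1 - α) ≤ (k : ℝ) := Int.le_ceil _
          have : ((K : ℤ) : ℝ) = (k : ℝ) := by exact_mod_cast hKk
          push_cast at this ⊢
          nlinarith
      _ ≤ (n + 1) * μ (B (Fin.last n)) := hsum'
      _ = μ (B (Fin.last n)) * (n + 1) := mul_comm _ _
  have hfin : ((n : ℝ≥0∞) + 1) ≠ 0 := by simp
  have hfin' : ((n : ℝ≥0∞) + 1) ≠ ⊤ := by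
    simp [ENNReal.add_ne_top]
  have h3 : ENNReal.ofReal (1 - α) ≤ μ (B (Fin.last n)) :=
    (ENNReal.mul_le_mul_iff_left hfin hfin').mp hle
  exact h3.trans (measure_mono hsubset)
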